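/- (Laplace approximation for elliptic credible sets.) Let A ⊆ ℝ^q be measurable and f : ℝ^p × A → ℝ measurable with e^f integrable; for each η ∈ A let θ_η ∈ ℝ^p, F_η symmetric positive definite, ◊_η ≥ 0 and Δ_η ≥ 0; fix (θ*, η*), F = F_{η*}, φ_η = f(θ_η, η) − f(θ*, η*), δ_η = (1/2) log det(F_η^{-1} F), and a k × p real matrix Q. For r ≥ 0 write G(r) = (∫_{{v : ‖Q v‖ ≤ r}} e^{-‖F^{1/2} v‖²/2} dv) / (∫_{ℝ^p} e^{-‖F^{1/2} v‖²/2} dv) and G_η(r) = (∫_{{u : ‖Q(θ_η − θ* + u)‖ ≤ r}} e^{-‖F_η^{1/2} u‖²/2} du) / (∫_{ℝ^p} e^{-‖F_η^{1/2} u‖²/2} du). Assume: (i) for every η ∈ A and measurable |h| ≤ 1, | ∫ e^{f(θ_η + u, η) − f(θ_η, η)} h(θ_η + u) du − ∫ e^{-‖F_η^{1/2} u‖²/2} h(θ_η + u) du | ≤ (◊_η + e^{-x}) ∫ e^{-‖F_η^{1/2} u‖²/2} du; (ii) for every η ∈ A, sup_{r ≥ 0} |G_η(r) − G(r)| ≤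 C · Δ_η for a constant C ≥ 0; (iii) the weights e^{φ_η + δ_η} are integrable with positive integral, err_A = (∫_A ◊_η e^{φ_η + δ_η} dη)/(∫_A e^{φ_η + δ_η} dη), Δ_A = (∫_A Δ_η e^{φ_η + δ_η} dη)/(∫_A e^{φ_η + δ_η} dη), and ◊_Q := err_A + C Δ_A satisfies ◊_Q + e^{-x} < 1/2. Then sup_{r ≥ 0} | (∫∫_{{(θ,η) : ‖Q(θ − θ*)‖ ≤ r}} e^{f(θ,η)} dθ dη) / (∫∫_{ℝ^p × A} e^{f(θ,η)} dθ dη) − G(r) | ≤ 2 (◊_Q + e^{-x}) / (1 − ◊_Q − e^{-x}). -/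

import Mathlib

open MeasureTheory

/-- The positive semidefinite square root of a matrix (equal to `0` off the
positive semidefinite matrices). -/
noncomputable def matSqrt {n : ℕ} (M : Matrix (Fin n) (Fin n) ℝ) : Matrix (Fin n) (Fin n) ℝ :=
  open scoped Classical in
  if h : M.PosSemidef then
    h.1.eigenvectorUnitary.1 * Matrix.diagonal (((↑) : ℝ → ℝ) ∘ (√·) ∘ h.1.eigenvalues) *
      (star h.1.eigenvectorUnitary : Matrix (Fin n) (Fin n) ℝ)
  else 0

lemma posSemidef_det_nonneg {n : ℕ} {S : Matrix (Fin n) (Fin n) ℝ} (hS : S.PosSemidef) :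
    0 ≤ S.det := by
  classical
  exact hS.det_nonneg

lemma matSqrt_mul_self {n : ℕ} {M : Matrix (Fin n) (Fin n) ℝ} (hM : M.PosSemidef) :
    matSqrt M * matSqrt M = M := by
  classical
  rw [matSqrt, dif_pos hM]
  have hU : (star hM.1.eigenvectorUnitary : Matrix (Fin n) (Fin n) ℝ) * hM.1.eigenvectorUnitary.1 = 1 :=
    Unitary.coe_star_mul_self _
  conv_rhs => rw [hM.1.spectral_theorem, Unitary.conjStarAlgAut_apply]
  calc _ = hM.1.eigenvectorUnitary.1 * (Matrix.diagonal (((↑) : ℝ → ℝ) ∘ (√·) ∘ hM.1.eigenvalues)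
        * ((star hM.1.eigenvectorUnitary : Matrix (Fin n) (Fin n) ℝ) * hM.1.eigenvectorUnitary.1)
        * Matrix.diagonal (((↑) : ℝ → ℝ) ∘ (√·) ∘ hM.1.eigenvalues))
        * (star hM.1.eigenvectorUnitary : Matrix (Fin n) (Fin n) ℝ) := by
          simp only [Matrix.mul_assoc]
    _ = _ := by
      rw [hU, Matrix.mul_one, Matrix.diagonal_mul_diagonal]
      congr 3
      funext i
      simp [Real.mul_self_sqrt (hM.eigenvalues_nonneg i)]

lemma matSqrt_det {n : ℕ} {M : Matrix (Fin n) (Fin n) ℝ} (hM : M.PosSemidef) :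
    (matSqrt M).det = Real.sqrt M.det := by
  have h1 : (matSqrt M).det * (matSqrt M).det = M.det := by
    rw [← Matrix.det_mul, matSqrt_mul_self hM]
  have h2 : 0 ≤ (matSqrt M).det := by
    classical
    rw [matSqrt, dif_pos hM, Matrix.det_mul, Matrix.det_mul, Matrix.det_diagonal]
    have : (star hM.1.eigenvectorUnitary : Matrix (Fin n) (Fin n) ℝ).det
        = (hM.1.eigenvectorUnitary.1).det := by
      rw [Matrix.star_eq_conjTranspose, Matrix.det_conjTranspose]; rfl
    rw [this]
    have : 0 ≤ ∏ i, (((↑) : ℝ → ℝ) ∘ (√·) ∘ hM.1.eigenvalues) i :=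
      Finset.prod_nonneg fun i _ => Real.sqrt_nonneg _
    nlinarith [mul_self_nonneg (hM.1.eigenvectorUnitary.1).det]
  rw [show Real.sqrt M.det = Real.sqrt ((matSqrt M).det * (matSqrt M).det) from by rw [h1],
    Real.sqrt_mul_self h2]

lemma det_toEuclideanLin {n : ℕ} (M : Matrix (Fin n) (Fin n) ℝ) :
    LinearMap.det (Matrix.toEuclideanLin M) = M.det := by
  rw [← LinearMap.det_toLin' M]
  have : (Matrix.toEuclideanLin M : EuclideanSpace ℝ (Fin n) →ₗ[ℝ] EuclideanSpace ℝ (Fin n))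
      = ((WithLp.linearEquiv 2 ℝ (Fin n → ℝ)).symm : (Fin n → ℝ) →ₗ[ℝ] _) ∘ₗ (Matrix.toLin' M)
        ∘ₗ ((WithLp.linearEquiv 2 ℝ (Fin n → ℝ)).symm.symm : _ →ₗ[ℝ] (Fin n → ℝ)) := rfl
  rw [this, LinearMap.det_conj]

lemma integrable_gauss0 (n : ℕ) :
    Integrable (fun v : EuclideanSpace ℝ (Fin n) => Real.exp (-‖v‖ ^ 2 / 2)) := by
  have h := GaussianFourier.integrable_cexp_neg_mul_sq_norm_add
    (V := EuclideanSpace ℝ (Fin n)) (b := (1/2 : ℂ)) (by norm_num) 0 0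
  simp only [zero_mul, add_zero] at h
  have h2 := h.norm
  have : (fun v : EuclideanSpace ℝ (Fin n) => Real.exp (-‖v‖ ^ 2 / 2))
      = fun a : EuclideanSpace ℝ (Fin n) => ‖Complex.exp (-(1/2 : ℂ) * (‖a‖ : ℂ)^2)‖ := by
    funext a
    rw [Complex.norm_exp,
      show (-(1/2:ℂ) * (‖a‖:ℂ)^2) = ((-‖a‖^2/2 : ℝ) : ℂ) by push_cast; ring,
      Complex.ofReal_re]
  rw [this]; exact h2

lemma integral_gauss0_pos (n : ℕ) :
    0 < ∫ v : EuclideanSpace ℝ (Fin n), Real.exp (-‖v‖ ^ 2 / 2) := by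
  have h := integrable_gauss0 n
  rw [integral_pos_iff_support_of_nonneg (fun v => (Real.exp_pos _).le) h]
  have : (Function.support fun v : EuclideanSpace ℝ (Fin n) => Real.exp (-‖v‖ ^ 2 / 2))
      = Set.univ := by
    ext v; simp [Function.support, (Real.exp_pos _).ne']
  rw [this]
  simpa using (IsOpen.measure_pos volume isOpen_univ (Set.univ_nonempty))

lemma measEmb_of_det_ne_zero {n : ℕ}
    (L : EuclideanSpace ℝ (Fin n) →ₗ[ℝ] EuclideanSpace ℝ (Fin n))
    (hL : LinearMap.det L ≠ 0) :
    MeasurableEmbedding (L : EuclideanSpace ℝ (Fin n) → EuclideanSpace ℝ (Fin n)) := by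
  have he : ⇑((L.equivOfDetNeZero hL).toContinuousLinearEquiv) = ⇑L := rfl
  have h := (L.equivOfDetNeZero hL).toContinuousLinearEquiv.toHomeomorph.measurableEmbedding
  rwa [show (⇑(L.equivOfDetNeZero hL).toContinuousLinearEquiv.toHomeomorph) = (⇑L) from he] at h

lemma integral_comp_lin {n : ℕ}
    (L : EuclideanSpace ℝ (Fin n) →ₗ[ℝ] EuclideanSpace ℝ (Fin n))
    (hL : LinearMap.det L ≠ 0) (g : EuclideanSpace ℝ (Fin n) → ℝ) :
    ∫ u, g (L u) = |LinearMap.det L|⁻¹ * ∫ v, g v := by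
  have hmap := Measure.map_linearMap_addHaar_eq_smul_addHaar (volume) hL
  rw [← (measEmb_of_det_ne_zero L hL).integral_map, hmap, integral_smul_measure,
    ENNReal.toReal_ofReal (abs_nonneg _), abs_inv]
  rfl

lemma integrable_comp_lin {n : ℕ}
    (L : EuclideanSpace ℝ (Fin n) →ₗ[ℝ] EuclideanSpace ℝ (Fin n))
    (hL : LinearMap.det L ≠ 0) (g : EuclideanSpace ℝ (Fin n) → ℝ) (hg : Integrable g) :
    Integrable (fun u => g (L u)) := by
  have hmap := Measure.map_linearMap_addHaar_eq_smul_addHaar (volume) hL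
  have h2 := (measEmb_of_det_ne_zero L hL).integrable_map_iff (μ := volume) (g := g)
  rw [hmap] at h2
  rw [show (fun u => g (L u)) = g ∘ L from rfl, ← h2]
  exact (hg.smul_measure (by simp))

lemma integrable_gaussM {n : ℕ} {M : Matrix (Fin n) (Fin n) ℝ} (hM : M.PosDef) :
    Integrable (fun u : EuclideanSpace ℝ (Fin n) =>
      Real.exp (-‖Matrix.toEuclideanLin (matSqrt M) u‖ ^ 2 / 2)) := by
  have hdet : LinearMap.det (Matrix.toEuclideanLin (matSqrt M)) ≠ 0 := by
    rw [det_toEuclideanLin, matSqrt_det hM.posSemidef]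
    exact (Real.sqrt_pos.2 hM.det_pos).ne'
  exact integrable_comp_lin _ hdet _ (integrable_gauss0 n)

lemma integral_gaussM {n : ℕ} {M : Matrix (Fin n) (Fin n) ℝ} (hM : M.PosDef) :
    ∫ u : EuclideanSpace ℝ (Fin n), Real.exp (-‖Matrix.toEuclideanLin (matSqrt M) u‖ ^ 2 / 2)
      = (Real.sqrt M.det)⁻¹ * ∫ v : EuclideanSpace ℝ (Fin n), Real.exp (-‖v‖ ^ 2 / 2) := by
  have hdet : LinearMap.det (Matrix.toEuclideanLin (matSqrt M)) ≠ 0 := by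
    rw [det_toEuclideanLin, matSqrt_det hM.posSemidef]
    exact (Real.sqrt_pos.2 hM.det_pos).ne'
  have := integral_comp_lin (Matrix.toEuclideanLin (matSqrt M)) hdet
    (fun v => Real.exp (-‖v‖ ^ 2 / 2))
  rw [this, det_toEuclideanLin, matSqrt_det hM.posSemidef,
    abs_of_pos (Real.sqrt_pos.2 hM.det_pos)]

set_option maxHeartbeats 2000000 in
/-- Laplace approximation for elliptic credible sets. -/
theorem laplace_elliptic_credible_sets
    (p q k : ℕ)
    (A : Set (EuclideanSpace ℝ (Fin q))) (hA : MeasurableSet A)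
    (f : EuclideanSpace ℝ (Fin p) → EuclideanSpace ℝ (Fin q) → ℝ)
    (hfm : Measurable (fun z : EuclideanSpace ℝ (Fin p) × EuclideanSpace ℝ (Fin q) =>
      f z.1 z.2))
    (θη : EuclideanSpace ℝ (Fin q) → EuclideanSpace ℝ (Fin p))
    (Fη : EuclideanSpace ℝ (Fin q) → Matrix (Fin p) (Fin p) ℝ)
    (dia Δη : EuclideanSpace ℝ (Fin q) → ℝ)
    (θs : EuclideanSpace ℝ (Fin p)) (ηs : EuclideanSpace ℝ (Fin q)) (hηs : ηs ∈ A)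
    (x : ℝ) (Q : Matrix (Fin k) (Fin p) ℝ)
    (hFη : ∀ η ∈ A, (Fη η).PosDef)
    (hdia : ∀ η ∈ A, 0 ≤ dia η) (hΔη : ∀ η ∈ A, 0 ≤ Δη η)
    (hintf : IntegrableOn
      (fun z : EuclideanSpace ℝ (Fin p) × EuclideanSpace ℝ (Fin q) => Real.exp (f z.1 z.2))
      ((Set.univ : Set (EuclideanSpace ℝ (Fin p))) ×ˢ A))
    (φ δ : EuclideanSpace ℝ (Fin q) → ℝ)
    (hφ : ∀ η, φ η = f (θη η) η - f θs ηs)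
    (hδ : ∀ η, δ η = (1 / 2) * Real.log ((Fη η)⁻¹ * Fη ηs).det)
    -- the Gaussian credible-set probabilities G(r) and G_η(r)
    (G : ℝ → ℝ) (Gη : EuclideanSpace ℝ (Fin q) → ℝ → ℝ)
    (hG : ∀ r, G r =
      (∫ v in {v : EuclideanSpace ℝ (Fin p) | ‖Matrix.toEuclideanLin Q v‖ ≤ r},
          Real.exp (-‖Matrix.toEuclideanLin (matSqrt (Fη ηs)) v‖ ^ 2 / 2)) /
        ∫ v, Real.exp (-‖Matrix.toEuclideanLin (matSqrt (Fη ηs)) v‖ ^ 2 / 2))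
    (hGη : ∀ η r, Gη η r =
      (∫ u in {u : EuclideanSpace ℝ (Fin p) |
          ‖Matrix.toEuclideanLin Q (θη η - θs + u)‖ ≤ r},
          Real.exp (-‖Matrix.toEuclideanLin (matSqrt (Fη η)) u‖ ^ 2 / 2)) /
        ∫ u, Real.exp (-‖Matrix.toEuclideanLin (matSqrt (Fη η)) u‖ ^ 2 / 2))
    -- (i) per-η Laplace approximation bound
    (hlap : ∀ η ∈ A, ∀ h : EuclideanSpace ℝ (Fin p) → ℝ, Measurable h → (∀ u, |h u| ≤ 1) →
      |(∫ u, Real.exp (f (θη η + u) η - f (θη η) η) * h (θη η + u)) -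
          ∫ u, Real.exp (-‖Matrix.toEuclideanLin (matSqrt (Fη η)) u‖ ^ 2 / 2) * h (θη η + u)|
        ≤ (dia η + Real.exp (-x)) *
            ∫ u, Real.exp (-‖Matrix.toEuclideanLin (matSqrt (Fη η)) u‖ ^ 2 / 2))
    -- (ii) Gaussian comparison bound
    (C : ℝ) (hC : 0 ≤ C)
    (hcomp : ∀ η ∈ A, ∀ r : ℝ, 0 ≤ r → |Gη η r - G r| ≤ C * Δη η)
    -- (iii) weights, err_A, Δ_A and smallness of ◊_Q
    (hw1 : IntegrableOn (fun η => dia η * Real.exp (φ η + δ η)) A)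
    (hw2 : IntegrableOn (fun η => Real.exp (φ η + δ η)) A)
    (hw3 : IntegrableOn (fun η => Δη η * Real.exp (φ η + δ η)) A)
    (hwpos : 0 < ∫ η in A, Real.exp (φ η + δ η))
    (errA ΔA diaQ : ℝ)
    (herrA : errA =
      (∫ η in A, dia η * Real.exp (φ η + δ η)) / ∫ η in A, Real.exp (φ η + δ η))
    (hΔA : ΔA =
      (∫ η in A, Δη η * Real.exp (φ η + δ η)) / ∫ η in A, Real.exp (φ η + δ η))
    (hdiaQ : diaQ = errA + C * ΔA)
    (hsmall : diaQ + Real.exp (-x) < 1 / 2) :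
    ∀ r : ℝ, 0 ≤ r →
      |(∫ z in {z : EuclideanSpace ℝ (Fin p) × EuclideanSpace ℝ (Fin q) |
            ‖Matrix.toEuclideanLin Q (z.1 - θs)‖ ≤ r ∧ z.2 ∈ A}, Real.exp (f z.1 z.2)) /
          (∫ z in (Set.univ : Set (EuclideanSpace ℝ (Fin p))) ×ˢ A, Real.exp (f z.1 z.2)) -
        G r|
        ≤ 2 * (diaQ + Real.exp (-x)) / (1 - diaQ - Real.exp (-x)) := by
  intro r hr
  classical
  -- notation
  set gs : EuclideanSpace ℝ (Fin q) → EuclideanSpace ℝ (Fin p) → ℝ :=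
    fun η u => Real.exp (-‖Matrix.toEuclideanLin (matSqrt (Fη η)) u‖ ^ 2 / 2) with hgs
  set N : EuclideanSpace ℝ (Fin q) → ℝ := fun η => ∫ u, gs η u with hNdef
  set c0 : ℝ := ∫ v : EuclideanSpace ℝ (Fin p), Real.exp (-‖v‖ ^ 2 / 2) with hc0def
  have hc0 : 0 < c0 := integral_gauss0_pos p
  have hNint : ∀ η ∈ A, Integrable (gs η) := fun η hη => integrable_gaussM (hFη η hη)
  have hNval : ∀ η ∈ A, N η = (Real.sqrt (Fη η).det)⁻¹ * c0 := by
    intro η hη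
    simpa [hNdef, hgs, hc0def] using integral_gaussM (hFη η hη)
  have hNpos : ∀ η ∈ A, 0 < N η := by
    intro η hη
    rw [hNval η hη]
    have := (hFη η hη).det_pos
    positivity
  -- ratio of normalizing constants
  have hNratio : ∀ η ∈ A, N η = Real.exp (δ η) * N ηs := by
    intro η hη
    have hd1 : (0:ℝ) < (Fη η).det := (hFη η hη).det_pos
    have hd2 : (0:ℝ) < (Fη ηs).det := (hFη ηs hηs).det_pos
    have hdet : ((Fη η)⁻¹ * Fη ηs).det = (Fη η).det⁻¹ * (Fη ηs).det := by
      rw [Matrix.det_mul, Matrix.det_nonsing_inv, Ring.inverse_eq_inv']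
    have ht : (0:ℝ) < (Fη η).det⁻¹ * (Fη ηs).det := by positivity
    have hexp : Real.exp (δ η) = Real.sqrt ((Fη η).det⁻¹ * (Fη ηs).det) := by
      rw [hδ η, hdet, Real.sqrt_eq_rpow, Real.rpow_def_of_pos ht, mul_comm]
    have hsq : Real.sqrt ((Fη η).det⁻¹ * (Fη ηs).det)
        = (Real.sqrt (Fη η).det)⁻¹ * Real.sqrt (Fη ηs).det := by
      rw [Real.sqrt_mul (by positivity), Real.sqrt_inv]
    have h2 : Real.sqrt (Fη ηs).det ≠ 0 := by positivity
    rw [hNval η hη, hNval ηs hηs, hexp, hsq]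
    field_simp
  -- the inner-integral functions
  set I : Set (EuclideanSpace ℝ (Fin p)) → EuclideanSpace ℝ (Fin q) → ℝ := fun s η => ∫ θ, Real.exp (f θ η) * s.indicator 1 θ with hIdef
  -- key per-η per-set estimate
  have key : ∀ η ∈ A, ∀ s : Set (EuclideanSpace ℝ (Fin p)), MeasurableSet s →
      |I s η - Real.exp (f (θη η) η) * ∫ u in ((θη η + ·) ⁻¹' s), gs η u|
        ≤ (dia η + Real.exp (-x)) * (Real.exp (f (θη η) η) * N η) := by
    intro η hη s hs
    set h : EuclideanSpace ℝ (Fin p) → ℝ := s.indicator 1 with hhdef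
    have hhm : Measurable h := measurable_const.indicator hs
    have hh1 : ∀ u, |h u| ≤ 1 := by
      intro u
      by_cases hu : u ∈ s <;> simp [hhdef, Set.indicator, hu]
    have hlap' := hlap η hη h hhm hh1
    have htrans : I s η = Real.exp (f (θη η) η) *
        ∫ u, Real.exp (f (θη η + u) η - f (θη η) η) * h (θη η + u) := by
      rw [hIdef]
      simp only []
      rw [← integral_add_left_eq_self (fun θ => Real.exp (f θ η) * h θ) (θη η)]
      rw [← integral_const_mul]
      congr 1
      funext u
      rw [Real.exp_sub]
      field_simp
    have hpre : MeasurableSet ((θη η + ·) ⁻¹' s) := hs.preimage (measurable_const_add _)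
    have hgind : (∫ u, gs η u * h (θη η + u)) = ∫ u in ((θη η + ·) ⁻¹' s), gs η u := by
      rw [← integral_indicator hpre]
      congr 1
      funext u
      by_cases hu : θη η + u ∈ s <;>
        simp [hhdef, Set.indicator, hu, Set.mem_preimage]
    rw [htrans, ← hgind, ← mul_sub, abs_mul, abs_of_pos (Real.exp_pos _)]
    have hb : |(∫ u, Real.exp (f (θη η + u) η - f (θη η) η) * h (θη η + u)) -
        ∫ u, gs η u * h (θη η + u)| ≤ (dia η + Real.exp (-x)) * N η := hlap'
    calc Real.exp (f (θη η) η) * |(∫ u, Real.exp (f (θη η + u) η - f (θη η) η) * h (θη η + u)) -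
          ∫ u, gs η u * h (θη η + u)|
        ≤ Real.exp (f (θη η) η) * ((dia η + Real.exp (-x)) * N η) := by
          exact mul_le_mul_of_nonneg_left hb (Real.exp_pos _).le
      _ = (dia η + Real.exp (-x)) * (Real.exp (f (θη η) η) * N η) := by ring
  -- Fubini facts
  have fub : ∀ s : Set (EuclideanSpace ℝ (Fin p)), MeasurableSet s →
      ((∫ z in s ×ˢ A, Real.exp (f z.1 z.2)) = ∫ η in A, I s η)
      ∧ IntegrableOn (fun η => I s η) A := by
    intro s hs
    set F1 : EuclideanSpace ℝ (Fin p) × EuclideanSpace ℝ (Fin q) → ℝ :=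
      fun z => Real.exp (f z.1 z.2) * s.indicator 1 z.1 * A.indicator 1 z.2 with hF1
    have hmeas : Measurable F1 :=
      (hfm.exp.mul ((measurable_const.indicator hs).comp measurable_fst)).mul
        ((measurable_const.indicator hA).comp measurable_snd)
    have hbound : Integrable (((Set.univ : Set (EuclideanSpace ℝ (Fin p))) ×ˢ A).indicator
        fun z : EuclideanSpace ℝ (Fin p) × EuclideanSpace ℝ (Fin q) => Real.exp (f z.1 z.2)) := by
      rw [integrable_indicator_iff (MeasurableSet.univ.prod hA)]
      exact hintf
    have hF1int : Integrable F1 := by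
      refine hbound.mono' hmeas.aestronglyMeasurable (Filter.Eventually.of_forall fun z => ?_)
      rw [Set.indicator_apply]
      by_cases h2 : z.2 ∈ A
      · have hz : z ∈ (Set.univ : Set (EuclideanSpace ℝ (Fin p))) ×ˢ A := ⟨Set.mem_univ _, h2⟩
        rw [if_pos hz]
        by_cases h1 : z.1 ∈ s <;>
          simp [hF1, Set.indicator, h1, h2, abs_of_nonneg, (Real.exp_pos _).le,
            abs_of_pos (Real.exp_pos _)]
      · have hz : z ∉ (Set.univ : Set (EuclideanSpace ℝ (Fin p))) ×ˢ A := fun hz => h2 hz.2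
        rw [if_neg hz]
        simp [hF1, Set.indicator, h2]
    have hF1int' : Integrable F1 ((volume : Measure (EuclideanSpace ℝ (Fin p))).prod volume) := by
      rwa [← Measure.volume_eq_prod]
    have hinner : ∀ η, (∫ θ, F1 (θ, η)) = A.indicator (fun η => I s η) η := by
      intro η
      by_cases h2 : η ∈ A
      · rw [Set.indicator_of_mem h2, hIdef]
        simp only [hF1]
        rw [show (fun θ => Real.exp (f θ η) * s.indicator 1 θ * A.indicator 1 η)
            = fun θ => Real.exp (f θ η) * s.indicator 1 θ from by
          funext θ; rw [Set.indicator_of_mem h2]; simp]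
      · rw [Set.indicator_of_notMem h2]
        simp only [hF1]
        rw [show (fun θ => Real.exp (f θ η) * s.indicator 1 θ * A.indicator 1 η)
            = fun θ => (0:ℝ) from by
          funext θ; rw [Set.indicator_of_notMem h2]; simp]
        simp
    have hiter : (∫ z, F1 z) = ∫ η in A, I s η := by
      rw [show (∫ z, F1 z) = ∫ z, F1 z ∂((volume : Measure (EuclideanSpace ℝ (Fin p))).prod volume) from by
        rw [← Measure.volume_eq_prod]]
      rw [integral_prod_symm F1 hF1int']
      rw [show (fun η => ∫ θ, F1 (θ, η)) = A.indicator (fun η => I s η) from funext hinner]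
      exact integral_indicator hA
    have hslice : Integrable (fun η => ∫ θ, F1 (θ, η)) volume :=
      hF1int'.integral_prod_right
    have hsliceA : IntegrableOn (fun η => I s η) A := by
      rw [← integrable_indicator_iff hA]
      rwa [show A.indicator (fun η => I s η) = fun η => ∫ θ, F1 (θ, η) from
        (funext hinner).symm]
    have hset2 : (∫ z in s ×ˢ A, Real.exp (f z.1 z.2)) = ∫ z, F1 z := by
      rw [← integral_indicator (hs.prod hA)]
      congr 1
      funext z
      rw [Set.indicator_apply]
      by_cases hz : z ∈ s ×ˢ A
      · rw [if_pos hz]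
        simp [hF1, Set.indicator_of_mem hz.1, Set.indicator_of_mem hz.2]
      · rw [if_neg hz]
        rw [Set.mem_prod, not_and_or] at hz
        rcases hz with h1 | h2
        · simp [hF1, Set.indicator_of_notMem h1]
        · simp [hF1, Set.indicator_of_notMem h2]
    exact ⟨by rw [hset2, hiter], hsliceA⟩
  -- the credible set
  set Sr : Set (EuclideanSpace ℝ (Fin p)) :=
    {θ | ‖Matrix.toEuclideanLin Q (θ - θs)‖ ≤ r} with hSrdef
  have hSr : MeasurableSet Sr := by
    have hcont : Continuous fun θ : EuclideanSpace ℝ (Fin p) =>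
        ‖Matrix.toEuclideanLin Q (θ - θs)‖ :=
      ((Matrix.toEuclideanLin Q).continuous_of_finiteDimensional.comp
        (continuous_id.sub continuous_const)).norm
    exact measurableSet_le hcont.measurable measurable_const
  -- constants
  set W : ℝ := ∫ η in A, Real.exp (φ η + δ η) with hWdef
  set c : ℝ := Real.exp (f θs ηs) * N ηs with hcdef
  have hcpos : 0 < c := mul_pos (Real.exp_pos _) (hNpos ηs hηs)
  have hWpos : 0 < W := hwpos
  set ε : ℝ := diaQ + Real.exp (-x) with hεdef
  have hE1nn : 0 ≤ ∫ η in A, dia η * Real.exp (φ η + δ η) :=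
    setIntegral_nonneg hA (fun η hη => mul_nonneg (hdia η hη) (Real.exp_pos _).le)
  have hE3nn : 0 ≤ ∫ η in A, Δη η * Real.exp (φ η + δ η) :=
    setIntegral_nonneg hA (fun η hη => mul_nonneg (hΔη η hη) (Real.exp_pos _).le)
  have herrnn : 0 ≤ errA := by rw [herrA]; exact div_nonneg hE1nn hWpos.le
  have hΔAnn : 0 ≤ ΔA := by rw [hΔA]; exact div_nonneg hE3nn hWpos.le
  have hεpos : 0 < ε := by
    have : 0 ≤ diaQ := by rw [hdiaQ]; positivity
    have := Real.exp_pos (-x)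
    rw [hεdef]; linarith
  have hεhalf : ε < 1 / 2 := hsmall
  -- identification of N with the explicit gaussian integrals
  have hNeq : ∀ η, (∫ u : EuclideanSpace ℝ (Fin p),
      Real.exp (-‖Matrix.toEuclideanLin (matSqrt (Fη η)) u‖ ^ 2 / 2)) = N η := by
    intro η; simp only [hNdef, hgs]
  -- G bounds
  have hS0 : MeasurableSet {v : EuclideanSpace ℝ (Fin p) | ‖Matrix.toEuclideanLin Q v‖ ≤ r} := by
    have hcont : Continuous fun v : EuclideanSpace ℝ (Fin p) => ‖Matrix.toEuclideanLin Q v‖ :=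
      (Matrix.toEuclideanLin Q).continuous_of_finiteDimensional.norm
    exact measurableSet_le hcont.measurable measurable_const
  have hGnn : 0 ≤ G r := by
    rw [hG r]
    exact div_nonneg (setIntegral_nonneg hS0 (fun v _ => (Real.exp_pos _).le))
      (integral_nonneg (fun v => (Real.exp_pos _).le))
  have hGle : G r ≤ 1 := by
    rw [hG r]
    rw [div_le_one (by rw [hNeq ηs]; exact hNpos ηs hηs)]
    exact setIntegral_le_integral (hNint ηs hηs)
      (Filter.Eventually.of_forall fun v => (Real.exp_pos _).le)
  -- per-η relation between exp(f(θη η) η) * N η and c * exp(φ η + δ η)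
  have hcw : ∀ η ∈ A, Real.exp (f (θη η) η) * N η = c * Real.exp (φ η + δ η) := by
    intro η hη
    rw [hNratio η hη, hcdef, hφ η, Real.exp_add, Real.exp_sub]
    field_simp [Real.exp_ne_zero]
  -- per-η numerator estimate
  have keyNum : ∀ η ∈ A,
      |I Sr η - c * G r * Real.exp (φ η + δ η)|
        ≤ c * Real.exp (φ η + δ η) * (dia η + Real.exp (-x) + C * Δη η) := by
    intro η hη
    have hk := key η hη Sr hSr
    have hpre_eq : ((θη η + ·) ⁻¹' Sr)
        = {u : EuclideanSpace ℝ (Fin p) | ‖Matrix.toEuclideanLin Q (θη η - θs + u)‖ ≤ r} := by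
      ext u
      simp only [Set.mem_preimage, hSrdef, Set.mem_setOf_eq]
      rw [show θη η + u - θs = θη η - θs + u from by abel]
    have hTval : (∫ u in ((θη η + ·) ⁻¹' Sr), gs η u) = Gη η r * N η := by
      have hgη := hGη η r
      rw [hNeq η] at hgη
      rw [hpre_eq]
      rw [show (∫ u in {u : EuclideanSpace ℝ (Fin p) |
          ‖Matrix.toEuclideanLin Q (θη η - θs + u)‖ ≤ r}, gs η u)
        = (∫ u in {u : EuclideanSpace ℝ (Fin p) |
          ‖Matrix.toEuclideanLin Q (θη η - θs + u)‖ ≤ r},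
            Real.exp (-‖Matrix.toEuclideanLin (matSqrt (Fη η)) u‖ ^ 2 / 2)) from by
          simp only [hgs]]
      rw [hgη, div_mul_cancel₀ _ (hNpos η hη).ne']
    have hk2 : |I Sr η - Real.exp (f (θη η) η) * ∫ u in ((θη η + ·) ⁻¹' Sr), gs η u|
        ≤ (dia η + Real.exp (-x)) * (c * Real.exp (φ η + δ η)) := by
      rw [← hcw η hη]; exact hk
    calc |I Sr η - c * G r * Real.exp (φ η + δ η)|
        ≤ |I Sr η - Real.exp (f (θη η) η) * ∫ u in ((θη η + ·) ⁻¹' Sr), gs η u|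
          + |Real.exp (f (θη η) η) * (∫ u in ((θη η + ·) ⁻¹' Sr), gs η u)
              - c * G r * Real.exp (φ η + δ η)| := abs_sub_le _ _ _
      _ ≤ (dia η + Real.exp (-x)) * (c * Real.exp (φ η + δ η))
          + (c * Real.exp (φ η + δ η)) * (C * Δη η) := by
          refine add_le_add hk2 ?_
          rw [hTval, show Real.exp (f (θη η) η) * (Gη η r * N η)
              = (c * Real.exp (φ η + δ η)) * Gη η r from by rw [← hcw η hη]; ring]
          rw [show (c * Real.exp (φ η + δ η)) * Gη η r - c * G r * Real.exp (φ η + δ η)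
              = (c * Real.exp (φ η + δ η)) * (Gη η r - G r) from by ring, abs_mul,
            abs_of_pos (show (0:ℝ) < c * Real.exp (φ η + δ η) from by positivity)]
          exact mul_le_mul_of_nonneg_left (hcomp η hη r hr) (by positivity)
      _ = c * Real.exp (φ η + δ η) * (dia η + Real.exp (-x) + C * Δη η) := by ring
  -- per-η denominator estimate
  have keyDen : ∀ η ∈ A,
      |I Set.univ η - c * Real.exp (φ η + δ η)|
        ≤ c * Real.exp (φ η + δ η) * (dia η + Real.exp (-x)) := by
    intro η hη
    have hk := key η hη Set.univ MeasurableSet.univ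
    rw [Set.preimage_univ, Measure.restrict_univ] at hk
    rw [show (∫ u, gs η u) = N η from by simp only [hNdef]] at hk
    rw [hcw η hη] at hk
    calc |I Set.univ η - c * Real.exp (φ η + δ η)|
        ≤ (dia η + Real.exp (-x)) * (c * Real.exp (φ η + δ η)) := hk
      _ = c * Real.exp (φ η + δ η) * (dia η + Real.exp (-x)) := by ring
  -- integrated comparison
  have integ : ∀ u v b : EuclideanSpace ℝ (Fin q) → ℝ, IntegrableOn u A → IntegrableOn v A →
      IntegrableOn b A → (∀ η ∈ A, |u η - v η| ≤ b η) →
      |(∫ η in A, u η) - ∫ η in A, v η| ≤ ∫ η in A, b η := by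
    intro u v b hu hv hb hpt
    rw [← integral_sub hu hv]
    have h1 : |∫ η in A, (u η - v η)| ≤ ∫ η in A, |u η - v η| := by
      simpa [Real.norm_eq_abs] using
        norm_integral_le_integral_norm (μ := volume.restrict A) (fun η => u η - v η)
    exact h1.trans (setIntegral_mono_on ((hu.sub hv).abs) hb hA hpt)
  -- numerator
  have hIa := (fub Sr hSr).2
  have hva : IntegrableOn (fun η => c * G r * Real.exp (φ η + δ η)) A := hw2.const_mul _
  have hbexp : (fun η => c * Real.exp (φ η + δ η) * (dia η + Real.exp (-x) + C * Δη η))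
      = fun η => c * (dia η * Real.exp (φ η + δ η)) + (c * Real.exp (-x)) * Real.exp (φ η + δ η)
          + (c * C) * (Δη η * Real.exp (φ η + δ η)) := by
    funext η; ring
  have i1 : IntegrableOn (fun η => c * (dia η * Real.exp (φ η + δ η))) A := hw1.const_mul c
  have i2 : IntegrableOn (fun η => (c * Real.exp (-x)) * Real.exp (φ η + δ η)) A :=
    hw2.const_mul _
  have i3 : IntegrableOn (fun η => (c * C) * (Δη η * Real.exp (φ η + δ η))) A :=
    hw3.const_mul _
  have i12 : IntegrableOn (fun η => c * (dia η * Real.exp (φ η + δ η))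
      + (c * Real.exp (-x)) * Real.exp (φ η + δ η)) A := i1.add i2
  have hba : IntegrableOn
      (fun η => c * Real.exp (φ η + δ η) * (dia η + Real.exp (-x) + C * Δη η)) A := by
    rw [hbexp]
    exact i12.add i3
  have hE1 : (∫ η in A, dia η * Real.exp (φ η + δ η)) = errA * W := by
    rw [herrA]; field_simp
  have hE3 : (∫ η in A, Δη η * Real.exp (φ η + δ η)) = ΔA * W := by
    rw [hΔA]; field_simp
  have hbval : (∫ η in A, c * Real.exp (φ η + δ η) * (dia η + Real.exp (-x) + C * Δη η))
      = c * W * ε := by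
    rw [hbexp, integral_add i12 i3, integral_add i1 i2,
      integral_const_mul, integral_const_mul, integral_const_mul, hE1, hE3, ← hWdef,
      hεdef, hdiaQ]
    ring
  have hvval : (∫ η in A, c * G r * Real.exp (φ η + δ η)) = c * G r * W := by
    rw [integral_const_mul, ← hWdef]
  have hNumEst : |(∫ η in A, I Sr η) - c * G r * W| ≤ c * W * ε := by
    rw [← hvval, ← hbval]
    exact integ _ _ _ hIa hva hba keyNum
  -- denominator
  have hIau := (fub Set.univ MeasurableSet.univ).2
  have hvau : IntegrableOn (fun η => c * Real.exp (φ η + δ η)) A := hw2.const_mul _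
  have hbexp2 : (fun η => c * Real.exp (φ η + δ η) * (dia η + Real.exp (-x)))
      = fun η => c * (dia η * Real.exp (φ η + δ η))
          + (c * Real.exp (-x)) * Real.exp (φ η + δ η) := by
    funext η; ring
  have hba2 : IntegrableOn
      (fun η => c * Real.exp (φ η + δ η) * (dia η + Real.exp (-x))) A := by
    rw [hbexp2]
    exact i1.add i2
  have hbval2 : (∫ η in A, c * Real.exp (φ η + δ η) * (dia η + Real.exp (-x)))
      ≤ c * W * ε := by
    rw [hbexp2, integral_add i1 i2,
      integral_const_mul, integral_const_mul, hE1, ← hWdef]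
    have : c * (errA * W) + c * Real.exp (-x) * W = c * W * (errA + Real.exp (-x)) := by ring
    rw [this]
    have hle : errA + Real.exp (-x) ≤ ε := by
      rw [hεdef, hdiaQ]
      nlinarith
    nlinarith [mul_pos hcpos hWpos, hle]
  have hvval2 : (∫ η in A, c * Real.exp (φ η + δ η)) = c * W := by
    rw [integral_const_mul, ← hWdef]
  have hDenEst : |(∫ η in A, I Set.univ η) - c * W| ≤ c * W * ε := by
    have h0 := le_trans (integ _ _ _ hIau hvau hba2 keyDen) hbval2
    rwa [hvval2] at h0
  -- rewrite the goal
  have hsetEq : {z : EuclideanSpace ℝ (Fin p) × EuclideanSpace ℝ (Fin q) |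
      ‖Matrix.toEuclideanLin Q (z.1 - θs)‖ ≤ r ∧ z.2 ∈ A} = Sr ×ˢ A := by
    ext z
    simp [hSrdef, Set.mem_prod]
  rw [hsetEq, (fub Sr hSr).1, (fub Set.univ MeasurableSet.univ).1]
  set NumV : ℝ := ∫ η in A, I Sr η with hNumV
  set DV : ℝ := ∫ η in A, I Set.univ η with hDV
  -- final algebra
  have hcW : 0 < c * W := by positivity
  have hDlow : c * W * (1 - ε) ≤ DV := by
    have h2 := (abs_le.1 hDenEst).1
    nlinarith
  have hDpos : 0 < DV := lt_of_lt_of_le (by nlinarith) hDlow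
  have hgoal : NumV / DV - G r = (NumV - G r * DV) / DV := by
    field_simp
  rw [hgoal, abs_div, abs_of_pos hDpos]
  have hnum2 : |NumV - G r * DV| ≤ 2 * (c * W * ε) := by
    have hsplit : NumV - G r * DV = (NumV - c * G r * W) + G r * (c * W - DV) := by ring
    calc |NumV - G r * DV| ≤ |NumV - c * G r * W| + |G r| * |c * W - DV| := by
          rw [hsplit]; exact (abs_add_le _ _).trans (by rw [abs_mul])
      _ ≤ c * W * ε + 1 * (c * W * ε) := by
          refine add_le_add hNumEst ?_
          have h1 : |G r| ≤ 1 := by rw [abs_of_nonneg hGnn]; exact hGle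
          have h2 : |c * W - DV| ≤ c * W * ε := by rw [abs_sub_comm]; exact hDenEst
          exact mul_le_mul h1 h2 (abs_nonneg _) zero_le_one
      _ = 2 * (c * W * ε) := by ring
  calc |NumV - G r * DV| / DV ≤ (2 * (c * W * ε)) / (c * W * (1 - ε)) := by
        apply div_le_div₀ (by positivity) hnum2 (by nlinarith) hDlow
    _ = 2 * ε / (1 - ε) := by
        rw [show 2 * (c * W * ε) = (c * W) * (2 * ε) from by ring,
          show c * W * (1 - ε) = (c * W) * (1 - ε) from by ring,
          mul_div_mul_left _ _ (ne_of_gt hcW)]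
    _ = 2 * (diaQ + Real.exp (-x)) / (1 - diaQ - Real.exp (-x)) := by
        rw [hεdef]; ring_nf
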